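/- In the discrete Cucker–Smale model with f non-increasing and f(y) < 1/s for all y, the diameter function satisfies z(n+1) ≤ (1 − s f(g(n))) z(n) for all n, where g(n) = M_x + h ∑_{m=0}^{n−1} z(m). -/

import Mathlib

open Finset

private lemma cs_convex_upper {ι : Type*} [Fintype ι] [DecidableEq ι] (i : ι)
    (c u : ι → ℝ) (a M : ℝ)
    (hc : ∀ j ∈ univ.erase i, a ≤ c j)
    (hS : (∑ j ∈ univ.erase i, c j) + a ≤ 1)
    (hu : ∀ j, u j ≤ M) :
    u i + ∑ j ∈ univ.erase i, c j * (u j - u i) ≤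
      (1 - (Fintype.card ι) * a) * M + a * ∑ j, u j := by
  set E := univ.erase i with hE
  have hiE : i ∈ (univ : Finset ι) := mem_univ i
  have hcard : (E.card : ℝ) = (Fintype.card ι : ℝ) - 1 := by
    rw [hE, card_erase_of_mem hiE, card_univ]
    have h1 : 1 ≤ Fintype.card ι := Fintype.card_pos_iff.mpr ⟨i⟩
    rw [Nat.cast_sub h1, Nat.cast_one]
  have hEu : ∑ j ∈ E, u j = (∑ j, u j) - u i := sum_erase_eq_sub hiE
  have split : ∑ j ∈ E, c j * (u j - u i)
      = (∑ j ∈ E, (c j - a) * (u j - u i)) + a * ((∑ j, u j) - u i - E.card * (u i)) := by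
    have h2 : ∀ j ∈ E, c j * (u j - u i) = (c j - a) * (u j - u i) + a * (u j - u i) := by
      intro j _; ring
    rw [sum_congr rfl h2, sum_add_distrib, ← mul_sum, sum_sub_distrib, hEu, sum_const,
      nsmul_eq_mul]
  have hbd : ∑ j ∈ E, (c j - a) * (u j - u i)
      ≤ ((∑ j ∈ E, c j) - E.card * a) * (M - u i) := by
    have h1 : ∑ j ∈ E, (c j - a) * (u j - u i) ≤ ∑ j ∈ E, (c j - a) * (M - u i) := by
      apply sum_le_sum
      intro j hj
      exact mul_le_mul_of_nonneg_left (by linarith [hu j]) (by linarith [hc j hj])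
    calc _ ≤ ∑ j ∈ E, (c j - a) * (M - u i) := h1
      _ = _ := by rw [← sum_mul, sum_sub_distrib, sum_const, nsmul_eq_mul]
  have hui : u i ≤ M := hu i
  have hprod : 0 ≤ (M - u i) * (1 - ((∑ j ∈ E, c j) + a)) :=
    mul_nonneg (by linarith) (by linarith)
  rw [hcard] at split hbd
  rw [split]
  nlinarith [hprod, hbd]

private lemma cs_convex_lower {ι : Type*} [Fintype ι] [DecidableEq ι] (i : ι)
    (c u : ι → ℝ) (a m : ℝ)
    (hc : ∀ j ∈ univ.erase i, a ≤ c j)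
    (hS : (∑ j ∈ univ.erase i, c j) + a ≤ 1)
    (hm : ∀ j, m ≤ u j) :
    (1 - (Fintype.card ι) * a) * m + a * ∑ j, u j ≤
      u i + ∑ j ∈ univ.erase i, c j * (u j - u i) := by
  have h := cs_convex_upper i c (fun j => -u j) a (-m) hc hS (fun j => neg_le_neg (hm j))
  simp only [neg_sub_neg] at h
  have e1 : ∑ j ∈ univ.erase i, c j * (u i - u j)
      = -∑ j ∈ univ.erase i, c j * (u j - u i) := by
    rw [← Finset.sum_neg_distrib]
    exact Finset.sum_congr rfl (fun j _ => by ring)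
  have e2 : ∑ j : ι, -u j = -∑ j : ι, u j := by
    rw [← Finset.sum_neg_distrib]
  rw [e1, e2] at h
  linarith

/-- In the discrete Cucker–Smale model with f non-increasing and f(y) < 1/s,
the diameter function satisfies z(n+1) ≤ (1 - s f(g(n))) z(n), where
g(n) = M_x + h ∑_{m<n} z(m). -/
theorem cuckerSmale_diameter_contraction {s : ℕ} (hs : 0 < s)
    (X V : ℕ → Fin s → EuclideanSpace ℝ (Fin 3)) (h : ℝ) (hh : 0 < h)
    (f : ℝ → ℝ) (hf_nonneg : ∀ y, 0 ≤ y → 0 ≤ f y)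
    (hf_anti : ∀ x y, 0 ≤ x → x ≤ y → f y ≤ f x)
    (hf_lt : ∀ y, 0 ≤ y → f y < 1 / s)
    (hX : ∀ n i, X (n+1) i = X n i + h • V n i)
    (hV : ∀ n i, V (n+1) i = V n i +
      ∑ j ∈ Finset.univ.erase i, f ‖X n i - X n j‖ • (V n j - V n i))
    (z : ℕ → ℝ)
    (hz : ∀ m, z m = ∑ r : Fin 3, ((⨆ i, V m i r) - (⨅ i, V m i r)))
    (Mx : ℝ) (hMx : Mx = ⨆ i, ⨆ j, ‖X 0 i - X 0 j‖)
    (g : ℕ → ℝ) (hg : ∀ n, g n = Mx + h * ∑ m ∈ Finset.range n, z m) :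
    ∀ n, z (n+1) ≤ (1 - (s : ℝ) * f (g n)) * z n := by
  haveI : Nonempty (Fin s) := ⟨⟨0, hs⟩⟩
  have hs0 : (0:ℝ) < (s:ℝ) := by exact_mod_cast hs
  -- diameter bound for velocity differences
  have habs : ∀ m i j (r : Fin 3),
      |V m i r - V m j r| ≤ (⨆ k, V m k r) - (⨅ k, V m k r) := by
    intro m i j r
    have h1 : V m i r ≤ ⨆ k, V m k r :=
      le_ciSup (f := fun k => V m k r) (Set.finite_range _).bddAbove i
    have h2 : (⨅ k, V m k r) ≤ V m j r :=
      ciInf_le (f := fun k => V m k r) (Set.finite_range _).bddBelow j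
    have h3 : V m j r ≤ ⨆ k, V m k r :=
      le_ciSup (f := fun k => V m k r) (Set.finite_range _).bddAbove j
    have h4 : (⨅ k, V m k r) ≤ V m i r :=
      ciInf_le (f := fun k => V m k r) (Set.finite_range _).bddBelow i
    rw [abs_le]; constructor <;> linarith
  have hd : ∀ m (r : Fin 3), (0:ℝ) ≤ (⨆ k, V m k r) - (⨅ k, V m k r) := fun m r =>
    le_trans (abs_nonneg _) (habs m ⟨0, hs⟩ ⟨0, hs⟩ r)
  have hznn : ∀ m, 0 ≤ z m := by
    intro m
    rw [hz m]
    exact Finset.sum_nonneg fun r _ => hd m r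
  have hVdiff : ∀ m i j, ‖V m i - V m j‖ ≤ z m := by
    intro m i j
    rw [hz m, EuclideanSpace.norm_eq]
    rw [show (∑ r : Fin 3, ((⨆ k, V m k r) - (⨅ k, V m k r)))
        = Real.sqrt ((∑ r : Fin 3, ((⨆ k, V m k r) - (⨅ k, V m k r)))^2) from
        (Real.sqrt_sq (Finset.sum_nonneg fun r _ => hd m r)).symm]
    apply Real.sqrt_le_sqrt
    have hsq : ∀ r : Fin 3, ‖(V m i - V m j) r‖^2 ≤ ((⨆ k, V m k r) - (⨅ k, V m k r))^2 := by
      intro r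
      have he : ‖(V m i - V m j) r‖ = |V m i r - V m j r| := by
        simp [Real.norm_eq_abs]
      rw [he]
      exact pow_le_pow_left₀ (abs_nonneg _) (habs m i j r) 2
    rw [Fin.sum_univ_three, Fin.sum_univ_three]
    nlinarith [hsq 0, hsq 1, hsq 2, mul_nonneg (hd m 0) (hd m 1),
      mul_nonneg (hd m 0) (hd m 2), mul_nonneg (hd m 1) (hd m 2)]
  -- position spread bound
  have hXbound : ∀ n i j, ‖X n i - X n j‖ ≤ g n := by
    intro n
    induction n with
    | zero =>
      intro i j
      rw [hg 0]
      simp only [Finset.range_zero, Finset.sum_empty, mul_zero, add_zero]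
      rw [hMx]
      calc ‖X 0 i - X 0 j‖ ≤ ⨆ k, ‖X 0 i - X 0 k‖ :=
            le_ciSup (f := fun k => ‖X 0 i - X 0 k‖) (Set.finite_range _).bddAbove j
        _ ≤ ⨆ l, ⨆ k, ‖X 0 l - X 0 k‖ :=
            le_ciSup (f := fun l => ⨆ k, ‖X 0 l - X 0 k‖) (Set.finite_range _).bddAbove i
    | succ n ih =>
      intro i j
      have he : X (n+1) i - X (n+1) j = (X n i - X n j) + h • (V n i - V n j) := by
        rw [hX n i, hX n j, smul_sub]
        abel
      have hgs : g (n+1) = g n + h * z n := by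
        rw [hg (n+1), hg n, Finset.sum_range_succ]
        ring
      rw [he, hgs]
      calc ‖(X n i - X n j) + h • (V n i - V n j)‖
          ≤ ‖X n i - X n j‖ + ‖h • (V n i - V n j)‖ := norm_add_le _ _
        _ = ‖X n i - X n j‖ + h * ‖V n i - V n j‖ := by
            rw [norm_smul, Real.norm_of_nonneg hh.le]
        _ ≤ g n + h * z n := by
            have := hVdiff n i j
            have := ih i j
            nlinarith
  have hg0 : ∀ n, 0 ≤ g n := fun n => le_trans (norm_nonneg _) (hXbound n ⟨0, hs⟩ ⟨0, hs⟩)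
  intro n
  set a := f (g n) with ha_def
  have ha0 : 0 ≤ a := hf_nonneg _ (hg0 n)
  -- coefficient facts for each i
  have hc : ∀ i : Fin s, ∀ j ∈ Finset.univ.erase i, a ≤ f ‖X n i - X n j‖ := by
    intro i j _
    exact hf_anti _ _ (norm_nonneg _) (hXbound n i j)
  have hS : ∀ i : Fin s, (∑ j ∈ Finset.univ.erase i, f ‖X n i - X n j‖) + a ≤ 1 := by
    intro i
    have h1 : ∑ j ∈ Finset.univ.erase i, f ‖X n i - X n j‖
        ≤ ∑ _j ∈ Finset.univ.erase i, 1 / (s:ℝ) := by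
      apply Finset.sum_le_sum
      intro j _
      exact (hf_lt _ (norm_nonneg _)).le
    have h2 : ∑ _j ∈ Finset.univ.erase i, (1:ℝ) / (s:ℝ) = ((s:ℝ) - 1) * (1 / s) := by
      rw [Finset.sum_const, Finset.card_erase_of_mem (Finset.mem_univ i), Finset.card_univ,
        Fintype.card_fin, nsmul_eq_mul, Nat.cast_sub hs, Nat.cast_one]
    have h3 : a < 1 / (s:ℝ) := hf_lt _ (hg0 n)
    have h4 : ((s:ℝ) - 1) * (1 / s) + 1 / s = 1 := by field_simp; ring
    linarith [h1.trans_eq h2]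
  -- coordinate form of the velocity recursion
  have hco : ∀ (i : Fin s) (r : Fin 3), V (n+1) i r
      = V n i r + ∑ j ∈ Finset.univ.erase i, f ‖X n i - X n j‖ * (V n j r - V n i r) := by
    intro i r
    have h1 : V (n+1) i r
        = V n i r + (∑ j ∈ Finset.univ.erase i, f ‖X n i - X n j‖ • (V n j - V n i)) r := by
      rw [hV n i]; rfl
    have h2 : (∑ j ∈ Finset.univ.erase i, f ‖X n i - X n j‖ • (V n j - V n i)) r
        = ∑ j ∈ Finset.univ.erase i, f ‖X n i - X n j‖ * (V n j r - V n i r) :=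
      by rw [WithLp.ofLp_sum]; exact Finset.sum_apply r _ _
    rw [h1, h2]
  -- per-coordinate contraction
  have hper : ∀ r : Fin 3,
      (⨆ i, V (n+1) i r) - (⨅ i, V (n+1) i r)
        ≤ (1 - (s:ℝ) * a) * ((⨆ i, V n i r) - (⨅ i, V n i r)) := by
    intro r
    set Ms := ⨆ k, V n k r with hMs
    set mi := ⨅ k, V n k r with hmi
    have hub : ∀ k, V n k r ≤ Ms :=
      fun k => le_ciSup (f := fun k => V n k r) (Set.finite_range _).bddAbove k
    have hlb : ∀ k, mi ≤ V n k r :=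
      fun k => ciInf_le (f := fun k => V n k r) (Set.finite_range _).bddBelow k
    have hup : (⨆ i, V (n+1) i r) ≤ (1 - (s:ℝ) * a) * Ms + a * ∑ j, V n j r := by
      apply ciSup_le
      intro i
      rw [hco i r]
      have := cs_convex_upper i (fun j => f ‖X n i - X n j‖) (fun j => V n j r) a Ms
        (hc i) (hS i) hub
      simpa [Fintype.card_fin] using this
    have hlo : (1 - (s:ℝ) * a) * mi + a * ∑ j, V n j r ≤ ⨅ i, V (n+1) i r := by
      apply le_ciInf
      intro i
      rw [hco i r]
      have := cs_convex_lower i (fun j => f ‖X n i - X n j‖) (fun j => V n j r) a mi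
        (hc i) (hS i) hlb
      simpa [Fintype.card_fin] using this
    linarith
  rw [hz (n+1), hz n, Finset.mul_sum]
  exact Finset.sum_le_sum fun r _ => hper r
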